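/- Let G consist of a cycle graph on state nodes 1,...,n (n ≥ 3; edges between consecutive nodes and between 1 and n) together with two input nodes u₁, u₂ adjacent to distinct state nodes k and l respectively. Then G is strongly sign controllable (for every α ⊆ V_S \ {k,l}, N(α)\α contains a vertex with exactly one neighbor in α) if and only if k and l are adjacent on the cycle. -/

import Mathlib

open scoped Classical

/-- Dedicated node of `α` in `G`: not in `α`, exactly one neighbor in `α`. -/
def ded {V : Type} (G : SimpleGraph V) (α : Finset V) (v : V) : Prop :=
  v ∉ α ∧ (α.filter (G.Adj v)).card = 1

/-- Cycle graph on state nodes `Fin n` (consecutive edges plus the edge between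
node `0` and node `n-1`) with two input nodes, adjacent to `k` and `l`. -/
def cycleTwoInput (n : ℕ) (k l : Fin n) : SimpleGraph (Fin n ⊕ Fin 2) :=
  SimpleGraph.fromRel (fun x y =>
    match x, y with
    | Sum.inl i, Sum.inl j => (i : ℕ) + 1 = (j : ℕ) ∨ ((i : ℕ) = 0 ∧ (j : ℕ) = n - 1)
    | Sum.inr u, Sum.inl j => (u = 0 ∧ j = k) ∨ (u = 1 ∧ j = l)
    | _, _ => False)

open Fin.CommRing Fin.NatCast

section Helpers

variable {n : ℕ}

lemma fin_one_ne_zero' [NeZero n] (hn : 3 ≤ n) : (1 : Fin n) ≠ 0 := by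
  intro h
  have := congrArg Fin.val h
  rw [show (1 : Fin n) = ((1:ℕ) : Fin n) by norm_cast, Fin.val_cast_of_lt (by omega)] at this
  simp at this

lemma fin_two_ne_zero' [NeZero n] (hn : 3 ≤ n) : (2 : Fin n) ≠ 0 := by
  intro h
  have := congrArg Fin.val h
  rw [show (2 : Fin n) = ((2:ℕ) : Fin n) by norm_cast, Fin.val_cast_of_lt (by omega)] at this
  simp at this

lemma fin_succ_iff [NeZero n] (hn : 3 ≤ n) (i j : Fin n) :
    j = i + 1 ↔ ((i:ℕ) + 1 = (j:ℕ) ∨ ((j:ℕ) = 0 ∧ (i:ℕ) = n - 1)) := by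
  have h1 : ((1 : Fin n) : ℕ) = 1 := by
    rw [show (1 : Fin n) = ((1:ℕ) : Fin n) by norm_cast, Fin.val_cast_of_lt (by omega)]
  rw [Fin.ext_iff, Fin.val_add, h1]
  rcases Nat.lt_or_ge (i.val + 1) n with h | h
  · rw [Nat.mod_eq_of_lt h]
    have := i.isLt; have := j.isLt; omega
  · have h2 : (i:ℕ) + 1 = n := by have := i.isLt; omega
    rw [h2, Nat.mod_self]
    have := j.isLt; omega

lemma adj_inl_iff [NeZero n] (hn : 3 ≤ n) (k l i j : Fin n) :
    (cycleTwoInput n k l).Adj (Sum.inl i) (Sum.inl j) ↔ (j = i + 1 ∨ i = j + 1) := by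
  rw [cycleTwoInput, SimpleGraph.fromRel_adj]
  show (Sum.inl i ≠ Sum.inl j ∧
    (((i : ℕ) + 1 = (j : ℕ) ∨ ((i : ℕ) = 0 ∧ (j : ℕ) = n - 1)) ∨
     ((j : ℕ) + 1 = (i : ℕ) ∨ ((j : ℕ) = 0 ∧ (i : ℕ) = n - 1)))) ↔ _
  rw [fin_succ_iff hn i j, fin_succ_iff hn j i]
  constructor
  · rintro ⟨-, h⟩; tauto
  · intro h
    refine ⟨?_, by tauto⟩
    intro hij
    rw [Sum.inl.injEq] at hij
    subst hij
    have := i.isLt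
    rcases h with h | h <;> omega

lemma adj_inr_imp (k l : Fin n) (u : Fin 2) (j : Fin n) :
    (cycleTwoInput n k l).Adj (Sum.inr u) (Sum.inl j) → j = k ∨ j = l := by
  rw [cycleTwoInput, SimpleGraph.fromRel_adj]
  rintro ⟨-, (⟨-, h⟩ | ⟨-, h⟩) | h⟩
  · exact Or.inl h
  · exact Or.inr h
  · exact absurd h not_false

lemma add_one_ne_sub_one [NeZero n] (hn : 3 ≤ n) (i : Fin n) : i + 1 ≠ i - 1 := by
  intro h
  exact fin_two_ne_zero' hn (by linear_combination h)

lemma ded_card [NeZero n] (hn : 3 ≤ n) (k l : Fin n) (β : Finset (Fin n)) (i : Fin n) :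
    ((β.image Sum.inl).filter ((cycleTwoInput n k l).Adj (Sum.inl i))).card
      = (β.filter (fun j => j = i + 1 ∨ j = i - 1)).card := by
  rw [Finset.filter_image, Finset.card_image_of_injective _ Sum.inl_injective]
  apply congrArg Finset.card
  apply Finset.filter_congr
  intro j _
  show (cycleTwoInput n k l).Adj (Sum.inl i) (Sum.inl j) ↔ _
  rw [adj_inl_iff hn]
  constructor
  · rintro (h | h)
    · exact Or.inl h
    · exact Or.inr (by rw [eq_sub_iff_add_eq, ← h])
  · rintro (h | h)
    · exact Or.inl h
    · exact Or.inr (by rw [eq_sub_iff_add_eq] at h; rw [← h])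

lemma exists_boundary [NeZero n] (hn : 3 ≤ n) (k : Fin n) (β : Finset (Fin n))
    (hne : β.Nonempty) (hk : k ∉ β) (hk1 : k + 1 ∉ β) :
    ∃ i : Fin n, i ∉ β ∧ i - 1 ∉ β ∧ i + 1 ∈ β := by
  obtain ⟨b, hb⟩ := hne
  have hex : ∃ s : ℕ, k + ((s : ℕ) : Fin n) ∈ β :=
    ⟨(b - k).val, by rw [Fin.cast_val_eq_self, show k + (b - k) = b from by ring]; exact hb⟩
  set t := Nat.find hex with htdef
  have hts : k + ((t : ℕ) : Fin n) ∈ β := Nat.find_spec hex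
  have h0 : t ≠ 0 := by intro h; rw [h] at hts; simp at hts; exact hk hts
  have h1 : t ≠ 1 := by intro h; rw [h] at hts; rw [Nat.cast_one] at hts; exact hk1 hts
  have ht2 : 2 ≤ t := by omega
  refine ⟨k + ((t - 1 : ℕ) : Fin n), ?_, ?_, ?_⟩
  · exact Nat.find_min hex (by omega)
  · have e : ((t - 1 : ℕ) : Fin n) = ((t - 2 : ℕ) : Fin n) + 1 := by
      conv_lhs => rw [show (t - 1 : ℕ) = (t - 2) + 1 from by omega]
      rw [Nat.cast_add, Nat.cast_one]
    have h : k + ((t - 1 : ℕ) : Fin n) - 1 = k + ((t - 2 : ℕ) : Fin n) := by rw [e]; ring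
    rw [h]
    exact Nat.find_min hex (by omega)
  · have e : ((t : ℕ) : Fin n) = ((t - 1 : ℕ) : Fin n) + 1 := by
      conv_lhs => rw [show (t : ℕ) = (t - 1) + 1 from by omega]
      rw [Nat.cast_add, Nat.cast_one]
    have h : k + ((t - 1 : ℕ) : Fin n) + 1 = k + ((t : ℕ) : Fin n) := by rw [e]; ring
    rw [h]
    exact hts

end Helpers

theorem stmt4 (n : ℕ) (hn : 3 ≤ n) (k l : Fin n) (hkl : k ≠ l) :
    (∀ β : Finset (Fin n), β.Nonempty → k ∉ β → l ∉ β →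
        ∃ v, ded (cycleTwoInput n k l) (β.image Sum.inl) v)
    ↔ (cycleTwoInput n k l).Adj (Sum.inl k) (Sum.inl l) := by
  haveI : NeZero n := ⟨by omega⟩
  have hone := fin_one_ne_zero' (n := n) hn
  constructor
  · intro h
    rw [adj_inl_iff hn]
    by_contra hadj
    push_neg at hadj
    obtain ⟨h1, h2⟩ := hadj
    set β : Finset (Fin n) := Finset.univ \ {k, l} with hβ
    have memβ : ∀ j : Fin n, j ∈ β ↔ (j ≠ k ∧ j ≠ l) := by
      intro j; simp [hβ, not_or]
    have hk1 : k + 1 ∈ β := by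
      rw [memβ]
      refine ⟨?_, fun hc => h1 hc.symm⟩
      intro hc
      exact hone (by linear_combination hc)
    have hkm : k - 1 ∈ β := by
      rw [memβ]
      refine ⟨?_, ?_⟩
      · intro hc; exact hone (by linear_combination - hc)
      · intro hc; exact h2 (by linear_combination hc)
    have hl1 : l + 1 ∈ β := by
      rw [memβ]
      refine ⟨fun hc => h2 hc.symm, ?_⟩
      intro hc
      exact hone (by linear_combination hc)
    have hlm : l - 1 ∈ β := by
      rw [memβ]
      refine ⟨?_, ?_⟩
      · intro hc; exact h1 (by linear_combination hc)
      · intro hc; exact hone (by linear_combination - hc)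
    obtain ⟨v, hv1, hv2⟩ := h β ⟨k + 1, hk1⟩ (by simp [hβ]) (by simp [hβ])
    match v with
    | Sum.inr u =>
      have hemp : (β.image Sum.inl).filter ((cycleTwoInput n k l).Adj (Sum.inr u)) = ∅ := by
        rw [Finset.filter_eq_empty_iff]
        rintro x hx
        obtain ⟨j, hj, rfl⟩ := Finset.mem_image.mp hx
        intro hadj
        rcases adj_inr_imp k l u j hadj with rfl | rfl
        · exact ((memβ j).mp hj).1 rfl
        · exact ((memβ j).mp hj).2 rfl
      rw [hemp] at hv2
      simp at hv2
    | Sum.inl i =>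
      have hi : i = k ∨ i = l := by
        by_contra hc
        push_neg at hc
        exact hv1 (Finset.mem_image_of_mem _ ((memβ i).mpr hc))
      rw [ded_card hn] at hv2
      have hge : 2 ≤ (β.filter (fun j => j = i + 1 ∨ j = i - 1)).card := by
        have hsub : ({i + 1, i - 1} : Finset (Fin n)) ⊆
            β.filter (fun j => j = i + 1 ∨ j = i - 1) := by
          intro x hx
          rw [Finset.mem_insert, Finset.mem_singleton] at hx
          rw [Finset.mem_filter]
          rcases hi with rfl | rfl <;> rcases hx with rfl | rfl
          · exact ⟨hk1, Or.inl rfl⟩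
          · exact ⟨hkm, Or.inr rfl⟩
          · exact ⟨hl1, Or.inl rfl⟩
          · exact ⟨hlm, Or.inr rfl⟩
        calc 2 = ({i + 1, i - 1} : Finset (Fin n)).card :=
              (Finset.card_pair (add_one_ne_sub_one hn i)).symm
          _ ≤ _ := Finset.card_le_card hsub
      omega
  · intro hadj β hne hkβ hlβ
    rw [adj_inl_iff hn] at hadj
    have key : ∃ i : Fin n, i ∉ β ∧ i - 1 ∉ β ∧ i + 1 ∈ β := by
      rcases hadj with h | h
      · exact exists_boundary hn k β hne hkβ (by rwa [← h])
      · exact exists_boundary hn l β hne hlβ (by rwa [← h])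
    obtain ⟨i, hi, him, hip⟩ := key
    refine ⟨Sum.inl i, ?_, ?_⟩
    · simp [hi]
    · rw [ded_card hn]
      have hfe : β.filter (fun j => j = i + 1 ∨ j = i - 1) = {i + 1} := by
        ext x
        rw [Finset.mem_filter, Finset.mem_singleton]
        constructor
        · rintro ⟨hx, rfl | rfl⟩
          · rfl
          · exact absurd hx him
        · rintro rfl
          exact ⟨hip, Or.inl rfl⟩
      rw [hfe, Finset.card_singleton]
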